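/- arXiv:0903.2307 — 6 statements merged into one kernel-verified Lean document; each statement's English description precedes it below -/
import Mathlib

section
/- For an integer n ≥ 1, the cokernel of the linear map ℤ² → ℤ² given by the matrix A_n − I is a cyclic group of order n; that is, (Fin 2 → ℤ) modulo the range of the linear map determined by A_n − I is isomorphic, as an abelian group, to ℤ/nℤ. -/
/-- For `n ≥ 1`, the cokernel of the linear map `ℤ² → ℤ²` given
by the matrix `Aₙ - I`, where `Aₙ = !![n+2, -1; 1, 0]`, is cyclic of order `n`:
`(Fin 2 → ℤ) ⧸ range (toLin' (Aₙ - 1)) ≃+ ZMod n`. -/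
theorem stmt_3 (n : ℕ) (hn : 1 ≤ n) :
    Nonempty (((Fin 2 → ℤ) ⧸ LinearMap.range
        (Matrix.toLin' ((!![(n : ℤ) + 2, -1; 1, 0] : Matrix (Fin 2) (Fin 2) ℤ) - 1)))
      ≃+ ZMod n) := by
  set M : Matrix (Fin 2) (Fin 2) ℤ := (!![(n : ℤ) + 2, -1; 1, 0]) - 1 with hM
  -- the map v ↦ v 0 - v 1 mod n
  let φ : (Fin 2 → ℤ) →ₗ[ℤ] ZMod n :=
    { toFun := fun v => ((v 0 : ZMod n) - (v 1 : ZMod n))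
      map_add' := by intro x y; simp [Pi.add_apply]; ring
      map_smul' := by intro c x; simp [Pi.smul_apply]; ring }
  have hφ : ∀ v : Fin 2 → ℤ, φ v = ((v 0 : ZMod n) - (v 1 : ZMod n)) := fun _ => rfl
  have hker : LinearMap.range (Matrix.toLin' M) = LinearMap.ker φ := by
    ext v
    constructor
    · rintro ⟨x, rfl⟩
      simp only [LinearMap.mem_ker, Matrix.toLin'_apply, hφ]
      have h0 : (M.mulVec x) 0 = ((n : ℤ) + 1) * x 0 - x 1 := by
        simp [hM, Matrix.mulVec, dotProduct, Fin.sum_univ_two, Matrix.one_apply]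
        ring
      have h1 : (M.mulVec x) 1 = x 0 - x 1 := by
        simp [hM, Matrix.mulVec, dotProduct, Fin.sum_univ_two, Matrix.one_apply]
        ring
      rw [h0, h1]
      push_cast
      simp [ZMod.natCast_self]
    · intro hv
      have hv' : ((v 0 - v 1 : ℤ) : ZMod n) = 0 := by
        push_cast
        simpa [hφ] using hv
      obtain ⟨k, hk⟩ := (ZMod.intCast_zmod_eq_zero_iff_dvd _ _).mp hv'
      refine ⟨![k, k - v 1], ?_⟩
      rw [Matrix.toLin'_apply]
      funext i
      fin_cases i <;>
        simp [hM, Matrix.mulVec, dotProduct, Fin.sum_univ_two, Matrix.one_apply] <;>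
        linarith [hk]
  have hsurj : Function.Surjective φ := by
    intro z
    obtain ⟨a, ha⟩ := ZMod.intCast_surjective (n := n) z
    exact ⟨![a, 0], by simp [hφ, ha]⟩
  refine ⟨((Submodule.quotEquivOfEq _ _ hker).trans
    (LinearMap.quotKerEquivOfSurjective φ hsurj)).toAddEquiv⟩
end

section
/- For integers n ≥ 1 and g ≥ 1, let B be the block-diagonal 2g×2g integer matrix consisting of g diagonal copies of A_n. Then the cokernel of the linear map ℤ^{2g} → ℤ^{2g} given by B − I is isomorphic, as an abelian group, to the direct sum of g copies of ℤ/nℤ. -/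
/-- For `n ≥ 1` and `g ≥ 1`, the cokernel of the linear map
`ℤ^{2g} → ℤ^{2g}` given by `B - I`, where `B` is the block-diagonal matrix made
of `g` copies of `Aₙ = !![n+2, -1; 1, 0]`, is isomorphic as an abelian group to
the direct sum of `g` copies of `ℤ/nℤ`. -/
theorem stmt_4 (n : ℕ) (hn : 1 ≤ n) (g : ℕ) (hg : 1 ≤ g) :
    Nonempty (((Fin 2 × Fin g → ℤ) ⧸ LinearMap.range
        (Matrix.toLin'
          ((Matrix.blockDiagonal fun _ : Fin g =>
            (!![(n : ℤ) + 2, -1; 1, 0] : Matrix (Fin 2) (Fin 2) ℤ)) - 1)))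
      ≃+ (Fin g → ZMod n)) := by
  haveI : NeZero n := ⟨by omega⟩
  set M : Matrix (Fin 2 × Fin g) (Fin 2 × Fin g) ℤ :=
    (Matrix.blockDiagonal fun _ : Fin g =>
      (!![(n : ℤ) + 2, -1; 1, 0] : Matrix (Fin 2) (Fin 2) ℤ)) - 1 with hM
  have hmul : ∀ (v : Fin 2 × Fin g → ℤ) (i : Fin 2) (j : Fin g),
      M.mulVec v (i, j)
        = (∑ i' : Fin 2, (!![(n : ℤ) + 2, -1; 1, 0]) i i' * v (i', j)) - v (i, j) := by
    intro v i j
    simp [hM, Matrix.mulVec, dotProduct, Matrix.sub_apply, Matrix.blockDiagonal_apply,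
      Matrix.one_apply, sub_mul, Fintype.sum_prod_type, Finset.sum_sub_distrib]
  have hmul0 : ∀ (v : Fin 2 × Fin g → ℤ) (j : Fin g),
      M.mulVec v (0, j) = ((n : ℤ) + 1) * v (0, j) - v (1, j) := by
    intro v j
    rw [hmul]
    simp [Fin.sum_univ_two, Matrix.cons_val_zero, Matrix.cons_val_one]
    ring
  have hmul1 : ∀ (v : Fin 2 × Fin g → ℤ) (j : Fin g),
      M.mulVec v (1, j) = v (0, j) - v (1, j) := by
    intro v j
    rw [hmul]
    simp [Fin.sum_univ_two]
  let f : (Fin 2 × Fin g → ℤ) →ₗ[ℤ] (Fin g → ZMod n) :=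
    { toFun := fun v j => ((v (0, j) - v (1, j) : ℤ) : ZMod n)
      map_add' := by intro u v; funext j; simp only [Pi.add_apply]; push_cast; ring
      map_smul' := by
        intro c v; funext j
        simp only [Pi.smul_apply, smul_eq_mul, RingHom.id_apply, zsmul_eq_mul]
        push_cast; ring }
  have hker : LinearMap.range (Matrix.toLin' M) = LinearMap.ker f := by
    ext v
    constructor
    · rintro ⟨w, rfl⟩
      simp only [LinearMap.mem_ker]
      funext j
      show (((Matrix.toLin' M) w (0, j) - (Matrix.toLin' M) w (1, j) : ℤ) : ZMod n) = 0
      rw [Matrix.toLin'_apply, hmul0, hmul1]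
      have : ((n : ℤ) + 1) * w (0, j) - w (1, j) - (w (0, j) - w (1, j))
          = (n : ℤ) * w (0, j) := by ring
      rw [this]
      push_cast
      simp [ZMod.natCast_self]
    · intro hv
      simp only [LinearMap.mem_ker] at hv
      have hdvd : ∀ j : Fin g, (n : ℤ) ∣ v (0, j) - v (1, j) := by
        intro j
        rw [← ZMod.intCast_zmod_eq_zero_iff_dvd]
        exact congrFun hv j
      set w : Fin 2 × Fin g → ℤ := fun p => (v (0, p.2) - v (1, p.2)) / n -
        (if p.1 = 1 then v (1, p.2) else 0) with hw
      refine ⟨w, ?_⟩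
      funext p
      obtain ⟨i, j⟩ := p
      rw [Matrix.toLin'_apply]
      have hn' : (n : ℤ) * ((v (0, j) - v (1, j)) / n) = v (0, j) - v (1, j) :=
        Int.mul_ediv_cancel' (hdvd j)
      have h0 : M.mulVec w (0, j) = v (0, j) := by
        rw [hmul0 w j]
        simp only [hw]
        norm_num
        nlinarith [hn']
      have h1 : M.mulVec w (1, j) = v (1, j) := by
        rw [hmul1 w j]
        simp only [hw]
        norm_num
      fin_cases i
      · exact h0
      · exact h1
  have hsurj : Function.Surjective f := by
    intro c
    refine ⟨fun p => if p.1 = 0 then ((c p.2).val : ℤ) else 0, ?_⟩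
    funext j
    show ((((c j).val : ℤ) - 0 : ℤ) : ZMod n) = c j
    push_cast
    simp [ZMod.natCast_val, ZMod.cast_id]
  rw [hker]
  exact ⟨(f.quotKerEquivOfSurjective hsurj).toAddEquiv⟩
end

section
/- Let G₁ and G₂ be groups and let ρ₁ : G₁ → ℂ* and ρ₂ : G₂ → ℂ* be group homomorphisms, with ℂ_ρ the 1-dimensional complex representation of G₁ × G₂ on which (g₁, g₂) acts by multiplication by ρ₁(g₁)·ρ₂(g₂). If ρ₁ and ρ₂ are both nontrivial, then H₁(G₁ × G₂, ℂ_ρ) = 0. -/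
/-!  Group homology via the complex of inhomogeneous chains
`C_n(G, V) = (Fin n → G) →₀ V`. -/

variable {k G V : Type} [CommRing k] [Group G] [AddCommGroup V] [Module k V]

/-- The differential `C_{n+1} → C_n` of the complex of inhomogeneous chains of a
group `G` with coefficients in a representation `ρ`. -/
noncomputable def chainsD (ρ : Representation k G V) (n : ℕ) :
    ((Fin (n + 1) → G) →₀ V) →ₗ[k] ((Fin n → G) →₀ V) :=
  Finsupp.lsum k fun g =>
    (Finsupp.lsingle fun i => g i.succ).comp (ρ (g 0)⁻¹) +
      ∑ j : Fin (n + 1),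
        ((-1 : k) ^ ((j : ℕ) + 1)) • Finsupp.lsingle (Fin.contractNth j (· * ·) g)

/-- First group homology `H₁(G, ρ) = ker (∂ : C₁ → C₀) / im (∂ : C₂ → C₁)`. -/
noncomputable abbrev groupHomology1 (ρ : Representation k G V) :=
  LinearMap.ker (chainsD ρ 0) ⧸
    (LinearMap.range (chainsD ρ 1)).comap (LinearMap.ker (chainsD ρ 0)).subtype

/-- The 1-dimensional complex representation of `G` attached to a character
`χ : G →* ℂˣ`. -/
noncomputable def charRep {G : Type} [Group G] (χ : G →* ℂˣ) :
    Representation ℂ G ℂ where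
  toFun g := (χ g : ℂ) • LinearMap.id
  map_one' := by
    simp only [map_one, Units.val_one, one_smul]
    rfl
  map_mul' g h := by
    simp only [map_mul, Units.val_mul, mul_smul]
    rfl

section A
variable {G : Type} [Group G] (χ : G →* ℂˣ)
set_option linter.unusedSectionVars false

lemma charRep_inv_apply (a : G) (v : ℂ) : charRep χ a⁻¹ v = (χ a : ℂ)⁻¹ * v := by
  simp [charRep]

lemma pt0 (g : Fin 1 → G) : Fin.contractNth 0 (· * ·) g = (default : Fin 0 → G) := by
  funext i; exact absurd i.2 (Nat.not_lt_zero _)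

lemma pt0' (g : Fin 1 → G) : (fun i : Fin 0 => g i.succ) = (default : Fin 0 → G) := by
  funext i; exact absurd i.2 (Nat.not_lt_zero _)

lemma pts (g : Fin 2 → G) : (fun i : Fin 1 => g i.succ) = ![g 1] := by
  funext i; fin_cases i; rfl

lemma ptc0 (g : Fin 2 → G) : Fin.contractNth 0 (· * ·) g = ![g 0 * g 1] := by
  funext i; fin_cases i; simp [Fin.contractNth]

lemma chainsD0_single (g : Fin 1 → G) (v : ℂ) :
    chainsD (charRep χ) 0 (Finsupp.single g v) =
      Finsupp.single default ((χ (g 0) : ℂ)⁻¹ * v - v) := by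
  simp only [chainsD, Finsupp.lsum_single, LinearMap.add_apply, LinearMap.comp_apply,
    LinearMap.sum_apply, LinearMap.smul_apply, Finsupp.lsingle_apply, Fin.sum_univ_succ,
    Finset.univ_eq_empty, Finset.sum_empty, charRep_inv_apply, pt0, pt0', add_zero]
  simp [Finsupp.single_sub, sub_eq_add_neg]

lemma chainsD1_single (g : Fin 2 → G) (v : ℂ) :
    chainsD (charRep χ) 1 (Finsupp.single g v) =
      Finsupp.single ![g 1] ((χ (g 0) : ℂ)⁻¹ * v) - Finsupp.single ![g 0 * g 1] v
        + Finsupp.single ![g 0] v := by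
  simp only [chainsD, Finsupp.lsum_single, LinearMap.add_apply, LinearMap.comp_apply,
    LinearMap.sum_apply, LinearMap.smul_apply, Finsupp.lsingle_apply, Fin.sum_univ_succ,
    Finset.univ_eq_empty, Finset.sum_empty, charRep_inv_apply, pts, ptc0, add_zero]
  simp [sub_eq_add_neg, add_assoc]
  congr 1
  funext i; fin_cases i; simp [Fin.contractNth]

lemma chainsD1_single1 (g : Fin 2 → G) :
    chainsD (charRep χ) 1 (Finsupp.single g (1 : ℂ)) =
      ((χ (g 0) : ℂ)⁻¹) • Finsupp.single ![g 1] (1 : ℂ) - Finsupp.single ![g 0 * g 1] (1:ℂ)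
        + Finsupp.single ![g 0] (1:ℂ) := by
  rw [chainsD1_single, Finsupp.smul_single, smul_eq_mul, mul_one]

end A

section B
variable {G₁ G₂ : Type} [Group G₁] [Group G₂] (ρ₁ : G₁ →* ℂˣ) (ρ₂ : G₂ →* ℂˣ)

lemma chiv (a : G₁) (b : G₂) :
    (((ρ₁.comp (MonoidHom.fst G₁ G₂) * ρ₂.comp (MonoidHom.snd G₁ G₂)) (a, b) : ℂˣ) : ℂ)
      = (ρ₁ a : ℂ) * (ρ₂ b : ℂ) := by
  simp

set_option maxHeartbeats 2000000 in
lemma key (s : G₂) (t : G₁) (hs : (ρ₂ s : ℂ) ≠ 1) (ht : (ρ₁ t : ℂ) ≠ 1) (g : G₁ × G₂) :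
    ∃ w, chainsD (charRep (ρ₁.comp (MonoidHom.fst G₁ G₂) * ρ₂.comp (MonoidHom.snd G₁ G₂))) 1 w
      = Finsupp.single ![g] (1:ℂ)
        + ((1 - (ρ₂ s : ℂ)⁻¹)⁻¹ * (((ρ₁ g.1 : ℂ) * (ρ₂ g.2 : ℂ))⁻¹ - 1)) •
            Finsupp.single ![((1, s) : G₁ × G₂)] (1:ℂ) := by
  have hσ : (1 : ℂ) - (ρ₂ s : ℂ)⁻¹ ≠ 0 := fun h => hs (inv_eq_one.mp (by linear_combination -h))
  have hτ : (1 : ℂ) - (ρ₁ t : ℂ)⁻¹ ≠ 0 := fun h => ht (inv_eq_one.mp (by linear_combination -h))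
  refine ⟨(-1 : ℂ) • Finsupp.single ![((g.1,1) : G₁×G₂), ((1,g.2) : G₁×G₂)] 1
      + ((1 - (ρ₂ s : ℂ)⁻¹)⁻¹) • (Finsupp.single ![((g.1,1) : G₁×G₂), ((1,s) : G₁×G₂)] 1
          - Finsupp.single ![((1,s) : G₁×G₂), ((g.1,1) : G₁×G₂)] 1)
      + ((ρ₁ g.1 : ℂ)⁻¹ * (1 - (ρ₁ t : ℂ)⁻¹)⁻¹) • (Finsupp.single ![((1,g.2) : G₁×G₂), ((t,1) : G₁×G₂)] 1
          - Finsupp.single ![((t,1) : G₁×G₂), ((1,g.2) : G₁×G₂)] 1)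
      + ((ρ₁ g.1 : ℂ)⁻¹ * (1 - (ρ₂ g.2 : ℂ)⁻¹) * (1 - (ρ₂ s : ℂ)⁻¹)⁻¹ * (1 - (ρ₁ t : ℂ)⁻¹)⁻¹) • (Finsupp.single ![((t,1) : G₁×G₂), ((1,s) : G₁×G₂)] 1
          - Finsupp.single ![((1,s) : G₁×G₂), ((t,1) : G₁×G₂)] 1), ?_⟩
  simp only [map_add, map_smul, map_sub, chainsD1_single1, Matrix.cons_val_zero,
    Matrix.cons_val_one, Matrix.head_cons, Prod.mk_mul_mk, one_mul, mul_one, Prod.mk.eta, chiv, map_one, Units.val_one, inv_one]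
  have n1 : (ρ₁ g.1 : ℂ) ≠ 0 := Units.ne_zero _
  have n2 : (ρ₂ g.2 : ℂ) ≠ 0 := Units.ne_zero _
  have n3 : (ρ₂ s : ℂ) ≠ 0 := Units.ne_zero _
  have n4 : (ρ₁ t : ℂ) ≠ 0 := Units.ne_zero _
  have hc : (1 - (ρ₂ s : ℂ)⁻¹)⁻¹ * (1 - (ρ₂ s : ℂ)⁻¹) = 1 := inv_mul_cancel₀ hσ
  have hd : (1 - (ρ₁ t : ℂ)⁻¹)⁻¹ * (1 - (ρ₁ t : ℂ)⁻¹) = 1 := inv_mul_cancel₀ hτ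
  match_scalars
  all_goals try ring
  · linear_combination ((ρ₁ g.1 : ℂ)⁻¹) * hd
  · linear_combination hc
  · linear_combination ((1 - (ρ₂ s : ℂ)⁻¹)⁻¹ * (ρ₁ g.1 : ℂ)⁻¹ * ((ρ₂ g.2 : ℂ)⁻¹ - 1)) * hd
  · linear_combination ((ρ₁ g.1 : ℂ)⁻¹ * (1 - (ρ₂ g.2 : ℂ)⁻¹) * (1 - (ρ₁ t : ℂ)⁻¹)⁻¹) * hc
end B


section C
variable {G₁ G₂ : Type} [Group G₁] [Group G₂] (ρ₁ : G₁ →* ℂˣ) (ρ₂ : G₂ →* ℂˣ)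

lemma chiv' (g : G₁ × G₂) :
    (((ρ₁.comp (MonoidHom.fst G₁ G₂) * ρ₂.comp (MonoidHom.snd G₁ G₂)) g : ℂˣ) : ℂ)
      = (ρ₁ g.1 : ℂ) * (ρ₂ g.2 : ℂ) := by
  simp

lemma ptx {G : Type} [Group G] (x : Fin 1 → G) : x = ![x 0] := by
  funext i; fin_cases i; rfl

lemma universal (s : G₂) (t : G₁) (hs : (ρ₂ s : ℂ) ≠ 1) (ht : (ρ₁ t : ℂ) ≠ 1)
    (f : (Fin 1 → G₁ × G₂) →₀ ℂ) :
    ∃ w, chainsD (charRep (ρ₁.comp (MonoidHom.fst G₁ G₂) * ρ₂.comp (MonoidHom.snd G₁ G₂))) 1 w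
      = f + ((1 - (ρ₂ s : ℂ)⁻¹)⁻¹ *
          ((chainsD (charRep (ρ₁.comp (MonoidHom.fst G₁ G₂) * ρ₂.comp (MonoidHom.snd G₁ G₂))) 0 f)
            default)) • Finsupp.single ![((1, s) : G₁ × G₂)] (1 : ℂ) := by
  induction f using Finsupp.induction_linear with
  | zero => exact ⟨0, by simp⟩
  | add f₁ f₂ ih₁ ih₂ =>
      obtain ⟨w₁, hw₁⟩ := ih₁
      obtain ⟨w₂, hw₂⟩ := ih₂
      refine ⟨w₁ + w₂, ?_⟩
      rw [map_add, hw₁, hw₂, map_add, Finsupp.add_apply, mul_add, add_smul]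
      abel
  | single x v =>
      obtain ⟨w₀, hw₀⟩ := key ρ₁ ρ₂ s t hs ht (x 0)
      refine ⟨v • w₀, ?_⟩
      rw [map_smul, hw₀, chainsD0_single, Finsupp.single_eq_same, smul_add, ← ptx,
        Finsupp.smul_single, smul_eq_mul, mul_one, smul_smul, chiv']
      congr 1
      ring

end C

/-- Let `G₁, G₂` be groups and `ρ₁ : G₁ → ℂ*`, `ρ₂ : G₂ → ℂ*`
homomorphisms, and let `ℂ_ρ` be the representation of `G₁ × G₂` on which
`(g₁, g₂)` acts by multiplication by `ρ₁ g₁ * ρ₂ g₂`.  If `ρ₁` and `ρ₂` are both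
nontrivial, then `H₁(G₁ × G₂, ℂ_ρ) = 0`. -/
theorem stmt_10 (G₁ G₂ : Type) [Group G₁] [Group G₂]
    (ρ₁ : G₁ →* ℂˣ) (ρ₂ : G₂ →* ℂˣ) (h₁ : ρ₁ ≠ 1) (h₂ : ρ₂ ≠ 1) :
    Subsingleton
      (groupHomology1 (charRep
        (ρ₁.comp (MonoidHom.fst G₁ G₂) * ρ₂.comp (MonoidHom.snd G₁ G₂)))) := by
  obtain ⟨t, ht0⟩ : ∃ t, ρ₁ t ≠ 1 := by
    by_contra h
    push_neg at h
    exact h₁ (MonoidHom.ext fun x => h x)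
  obtain ⟨s, hs0⟩ : ∃ s, ρ₂ s ≠ 1 := by
    by_contra h
    push_neg at h
    exact h₂ (MonoidHom.ext fun x => h x)
  have ht : (ρ₁ t : ℂ) ≠ 1 := fun h => ht0 (Units.ext (by simpa using h))
  have hs : (ρ₂ s : ℂ) ≠ 1 := fun h => hs0 (Units.ext (by simpa using h))
  rw [Submodule.Quotient.subsingleton_iff, Submodule.eq_top_iff']
  intro x
  rw [Submodule.mem_comap, Submodule.subtype_apply]
  obtain ⟨w, hw⟩ := universal ρ₁ ρ₂ s t hs ht (x : (Fin 1 → G₁ × G₂) →₀ ℂ)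
  refine ⟨w, ?_⟩
  rw [hw, x.2]
  simp
end

section
/- Let G₁ and G₂ be groups and let ρ₁ : G₁ → ℂ* be a nontrivial group homomorphism. Let ℂ_ρ be the 1-dimensional complex representation of G₁ × G₂ on which (g₁, g₂) acts by multiplication by ρ₁(g₁) (i.e., the character is trivial on the factor G₂). Then H₁(G₁ × G₂, ℂ_ρ) is isomorphic, as a complex vector space, to H₁(G₁, ℂ_{ρ₁}). -/
/-!  Group homology via the complex of inhomogeneous chains
`C_n(G, V) = (Fin n → G) →₀ V`. -/

variable {k G V : Type} [CommRing k] [Group G] [AddCommGroup V] [Module k V]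

set_option linter.unusedSectionVars false

lemma chainsD_single (ρ : Representation k G V) (n : ℕ) (g : Fin (n+1) → G) (v : V) :
    chainsD ρ n (Finsupp.single g v) =
      Finsupp.single (fun i => g i.succ) (ρ (g 0)⁻¹ v) +
        ∑ j : Fin (n + 1),
          ((-1 : k) ^ ((j : ℕ) + 1)) • Finsupp.single (Fin.contractNth j (· * ·) g) v := by
  simp [chainsD, Finsupp.lsum_single]

lemma contractNth_comp {G H : Type} [Group G] [Group H] (f : G →* H) {n : ℕ}
    (j : Fin (n+1)) (g : Fin (n+1) → G) :
    (fun i => f (Fin.contractNth j (· * ·) g i)) = Fin.contractNth j (· * ·) (fun i => f (g i)) := by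
  funext i
  rcases lt_trichotomy (i : ℕ) (j : ℕ) with h | h | h
  · rw [Fin.contractNth_apply_of_lt _ _ _ _ h, Fin.contractNth_apply_of_lt _ _ _ _ h]
  · rw [Fin.contractNth_apply_of_eq _ _ _ _ h, Fin.contractNth_apply_of_eq _ _ _ _ h, map_mul]
  · rw [Fin.contractNth_apply_of_gt _ _ _ _ h, Fin.contractNth_apply_of_gt _ _ _ _ h]

lemma fin1_eq (g : Fin 1 → G) : g = ![g 0] := by
  funext i; fin_cases i; rfl

lemma succ_matrix (a b : G) : (fun i : Fin 1 => (![a,b] : Fin 2 → G) i.succ) = ![b] := by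
  funext i; fin_cases i; rfl

lemma contract0 (a b : G) : Fin.contractNth (0 : Fin 2) (· * ·) ![a,b] = ![a*b] := by
  funext i; fin_cases i
  · rw [Fin.contractNth_apply_of_eq _ _ _ _ rfl]; rfl

lemma contract1 (a b : G) : Fin.contractNth (1 : Fin 2) (· * ·) ![a,b] = ![a] := by
  funext i; fin_cases i
  · rw [Fin.contractNth_apply_of_lt _ _ _ _ (by norm_num)]; rfl

lemma chainsD_one_single (ρ : Representation k G V) (a b : G) (v : V) :
    chainsD ρ 1 (Finsupp.single ![a,b] v) =
      Finsupp.single ![b] (ρ a⁻¹ v) - Finsupp.single ![a*b] v + Finsupp.single ![a] v := by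
  rw [chainsD_single, Fin.sum_univ_two, succ_matrix, contract0, contract1]
  norm_num
  abel

lemma chainsD_zero_single (ρ : Representation k G V) (g : Fin 1 → G) (v : V) :
    chainsD ρ 0 (Finsupp.single g v) =
      Finsupp.single (fun i => g i.succ) (ρ (g 0)⁻¹ v) - Finsupp.single (fun i => g i.succ) v := by
  rw [chainsD_single, Fin.sum_univ_one]
  have : (Fin.contractNth (0:Fin 1) (· * ·) g) = (fun i => g i.succ) := by
    funext i; exact absurd i.2 (by simp)
  rw [this]
  norm_num
  abel

lemma charRep_apply {G : Type} [Group G] (χ : G →* ℂˣ) (g : G) (v : ℂ) :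
    charRep χ g v = (χ g : ℂ) * v := rfl

section Comm
variable {G' H : Type} [Group G'] [Group H] (f : G' →* H) (χ : H →* ℂˣ)

noncomputable def chmap (n : ℕ) : ((Fin n → G') →₀ ℂ) →ₗ[ℂ] ((Fin n → H) →₀ ℂ) :=
  Finsupp.lmapDomain ℂ ℂ (fun v i => f (v i))

lemma chainsD_comm (n : ℕ) :
    (chainsD (charRep χ) n) ∘ₗ chmap f n.succ
      = chmap f n ∘ₗ chainsD (charRep (χ.comp f)) n := by
  apply Finsupp.lhom_ext
  intro g v
  simp only [LinearMap.comp_apply, chmap, Finsupp.lmapDomain_apply, Finsupp.mapDomain_single,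
    chainsD_single, Finsupp.mapDomain_add, Finsupp.mapDomain_finset_sum, Finsupp.mapDomain_smul,
    Finsupp.mapDomain_single]
  congr 1
  · congr 1
    simp [charRep_apply]
  · refine Finset.sum_congr rfl fun j _ => ?_
    rw [contractNth_comp]
end Comm

section Maps
variable {G' H : Type} [Group G'] [Group H] (f : G' →* H) (χ : H →* ℂˣ)

lemma kerMap_mem (x : (Fin 1 → G') →₀ ℂ) (hx : x ∈ LinearMap.ker (chainsD (charRep (χ.comp f)) 0)) :
    chmap f 1 x ∈ LinearMap.ker (chainsD (charRep χ) 0) := by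
  rw [LinearMap.mem_ker] at hx ⊢
  have := congrArg (fun φ => φ x) (chainsD_comm f χ 0)
  simpa [hx] using this

noncomputable def kerMap : LinearMap.ker (chainsD (charRep (χ.comp f)) 0) →ₗ[ℂ]
    LinearMap.ker (chainsD (charRep χ) 0) :=
  (chmap f 1).restrict (kerMap_mem f χ)

noncomputable def Hmap : groupHomology1 (charRep (χ.comp f)) →ₗ[ℂ] groupHomology1 (charRep χ) :=
  Submodule.mapQ _ _ (kerMap f χ) (by
    rintro ⟨x, hx⟩ hmem
    simp only [Submodule.mem_comap, LinearMap.mem_range] at hmem ⊢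
    obtain ⟨z, hz⟩ := hmem
    refine ⟨chmap f 2 z, ?_⟩
    have := congrArg (fun φ => φ z) (chainsD_comm f χ 1)
    simp only [LinearMap.comp_apply] at this
    rw [this, hz]
    rfl)
end Maps

section Homotopy
variable {G₁ G₂ : Type} [Group G₁] [Group G₂] (ρ₁ : G₁ →* ℂˣ) (s : G₁)

noncomputable def hmt : ((Fin 1 → G₁ × G₂) →₀ ℂ) →ₗ[ℂ] ((Fin 2 → G₁ × G₂) →₀ ℂ) :=
  Finsupp.lsum ℂ fun g =>
    Finsupp.lsingle ![((g 0).1, 1), (1, (g 0).2)] +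
      ((((ρ₁ (g 0).1 : ℂ))⁻¹) * (-(((ρ₁ s : ℂ))⁻¹ - 1)⁻¹)) •
        (Finsupp.lsingle ![(s, 1), (1, (g 0).2)] - Finsupp.lsingle ![(1, (g 0).2), (s, 1)])

lemma homotopy (hs : ((ρ₁ s : ℂ))⁻¹ - 1 ≠ 0) :
    chainsD (charRep (ρ₁.comp (MonoidHom.fst G₁ G₂))) 1 ∘ₗ hmt ρ₁ s =
      chmap ((MonoidHom.inl G₁ G₂).comp (MonoidHom.fst G₁ G₂)) 1 - LinearMap.id := by
  apply Finsupp.lhom_ext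
  intro g v
  obtain ⟨a, rfl⟩ : ∃ a, g = ![a] := ⟨g 0, fin1_eq g⟩
  obtain ⟨a₁, a₂⟩ := a
  have hq : (fun i => (((MonoidHom.inl G₁ G₂).comp (MonoidHom.fst G₁ G₂))
      ((![((a₁ : G₁), (a₂ : G₂))] : Fin 1 → G₁ × G₂) i))) = ![((a₁ : G₁), (1 : G₂))] := by
    funext i; fin_cases i; rfl
  simp only [LinearMap.comp_apply, LinearMap.sub_apply, LinearMap.id_apply, chmap,
    Finsupp.lmapDomain_apply, Finsupp.mapDomain_single, hq, hmt, Finsupp.lsum_single,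
    LinearMap.add_apply, LinearMap.smul_apply, LinearMap.sub_apply, Finsupp.lsingle_apply,
    Matrix.cons_val_zero, map_add, map_smul, map_sub, chainsD_one_single]
  simp only [charRep_apply, map_inv, MonoidHom.comp_apply, MonoidHom.coe_fst, Prod.mk_mul_mk,
    one_mul, mul_one, map_one, Units.val_inv_eq_inv_val, Units.val_one, Prod.mk.eta]
  have hα : (ρ₁ a₁ : ℂ) ≠ 0 := Units.ne_zero _
  have hΛ : (ρ₁ s : ℂ) ≠ 0 := Units.ne_zero _
  have h1 : 1 - (ρ₁ s : ℂ) ≠ 0 := by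
    intro h
    apply hs
    have : (ρ₁ s : ℂ) = 1 := by linear_combination -h
    rw [this]; norm_num
  simp only [inv_one, one_mul, ← Finsupp.smul_single']
  match_scalars <;> field_simp <;> ring
end Homotopy


/-- Let `G₁, G₂` be groups and `ρ₁ : G₁ → ℂ*` a nontrivial
homomorphism, and let `ℂ_ρ` be the representation of `G₁ × G₂` on which
`(g₁, g₂)` acts by multiplication by `ρ₁ g₁` (the pullback of `ℂ_{ρ₁}` along the
first projection).  Then `H₁(G₁ × G₂, ℂ_ρ)` is isomorphic as a complex vector
space to `H₁(G₁, ℂ_{ρ₁})`. -/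
theorem stmt_11 (G₁ G₂ : Type) [Group G₁] [Group G₂]
    (ρ₁ : G₁ →* ℂˣ) (h₁ : ρ₁ ≠ 1) :
    Nonempty
      (groupHomology1 (charRep (ρ₁.comp (MonoidHom.fst G₁ G₂))) ≃ₗ[ℂ]
        groupHomology1 (charRep ρ₁)) := by
  obtain ⟨s, hs0⟩ : ∃ s, ρ₁ s ≠ 1 := by
    by_contra h
    push_neg at h
    exact h₁ (MonoidHom.ext fun x => h x)
  have hs : ((ρ₁ s : ℂ))⁻¹ - 1 ≠ 0 := by
    rw [sub_ne_zero]
    intro h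
    rw [inv_eq_one] at h
    exact hs0 (Units.ext h)
  set χ := ρ₁.comp (MonoidHom.fst G₁ G₂) with hχ
  set P : groupHomology1 (charRep χ) →ₗ[ℂ] groupHomology1 (charRep ρ₁) :=
    Hmap (MonoidHom.fst G₁ G₂) ρ₁ with hP
  set I : groupHomology1 (charRep ρ₁) →ₗ[ℂ] groupHomology1 (charRep χ) :=
    Hmap (MonoidHom.inl G₁ G₂) χ with hI
  refine ⟨LinearEquiv.ofLinear P I ?_ ?_⟩
  · -- P ∘ I = id
    apply LinearMap.ext
    intro x
    obtain ⟨y, rfl⟩ := Submodule.Quotient.mk_surjective _ x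
    simp only [LinearMap.comp_apply, LinearMap.id_apply, hP, hI, Hmap]
    erw [Submodule.mapQ_apply]
    congr 1
    apply Subtype.ext
    simp only [kerMap, LinearMap.restrict_coe_apply]
    simp only [chmap, Finsupp.lmapDomain_apply]
    change Finsupp.mapDomain (fun v i => (MonoidHom.fst G₁ G₂) (v i))
      (Finsupp.mapDomain (fun v i => (MonoidHom.inl G₁ G₂) (v i)) (y : (Fin 1 → G₁) →₀ ℂ)) = _
    rw [← Finsupp.mapDomain_comp]
    exact Finsupp.mapDomain_id
    exact ⊥
    exact bot_le
  · -- I ∘ P = id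
    apply LinearMap.ext
    intro x
    obtain ⟨y, rfl⟩ := Submodule.Quotient.mk_surjective _ x
    simp only [LinearMap.comp_apply, LinearMap.id_apply, hP, hI, Hmap]
    erw [Submodule.mapQ_apply]
    rw [Submodule.Quotient.eq]
    simp only [Submodule.mem_comap, Submodule.coe_subtype, LinearMap.mem_range]
    refine ⟨hmt ρ₁ s (y : (Fin 1 → G₁ × G₂) →₀ ℂ), ?_⟩
    have := congrArg (fun φ => φ (y : (Fin 1 → G₁ × G₂) →₀ ℂ)) (homotopy ρ₁ s hs)
    simp only [LinearMap.comp_apply, LinearMap.sub_apply, LinearMap.id_apply] at this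
    rw [this]
    congr 1
    simp only [AddSubgroupClass.coe_sub, kerMap, LinearMap.restrict_coe_apply]
    simp only [chmap, Finsupp.lmapDomain_apply]
    change _ = Finsupp.mapDomain (fun v i => (MonoidHom.inl G₁ G₂) (v i))
      (Finsupp.mapDomain (fun v i => (MonoidHom.fst G₁ G₂) (v i)) (y : (Fin 1 → G₁ × G₂) →₀ ℂ))
    rw [← Finsupp.mapDomain_comp]
    rfl
    exact ⊥
    exact bot_le
end

section
/- Let n ≥ 2 and g ≥ 1 be integers, let B be the block-diagonal 2g×2g integer matrix consisting of g diagonal copies of A_n, and let σ_B be the automorphism of the free abelian group ℤ^{2g} determined by B (invertible over ℤ since det A_n = 1). Then the abelianization of the group ℤ × (ℤ^{2g} ⋊_{σ_B} ℤ) is isomorphic to ℤ² ⊕ (ℤ/nℤ)^g. -/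
namespace Stmt12
variable (n g : ℕ) (σ : MulAut (Multiplicative (Fin 2 × Fin g → ℤ)))

abbrev V := Fin 2 × Fin g → ℤ

abbrev G := Multiplicative ℤ ×
  (Multiplicative (Fin 2 × Fin g → ℤ)
    ⋊[zpowersHom (MulAut (Multiplicative (Fin 2 × Fin g → ℤ))) σ] Multiplicative ℤ)

abbrev T := (Fin 2 → ℤ) × (Fin g → ZMod n)

variable (hσ : ∀ v : Fin 2 × Fin g → ℤ,
      Multiplicative.toAdd (σ (Multiplicative.ofAdd v)) =
        Matrix.toLin'
          (Matrix.blockDiagonal fun _ : Fin g =>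
            (!![(n : ℤ) + 2, -1; 1, 0] : Matrix (Fin 2) (Fin 2) ℤ)) v)

include hσ in
lemma sigma0 (v : V g) (i : Fin g) :
    Multiplicative.toAdd (σ (Multiplicative.ofAdd v)) (0, i)
      = (n + 2) * v (0, i) - v (1, i) := by
  rw [hσ]
  simp [Matrix.toLin'_apply, Matrix.mulVec, dotProduct, Fintype.sum_prod_type,
    Matrix.blockDiagonal_apply, Fin.sum_univ_two, Finset.sum_ite_eq, Matrix.of_apply]
  ring

include hσ in
lemma sigma1 (v : V g) (i : Fin g) :
    Multiplicative.toAdd (σ (Multiplicative.ofAdd v)) (1, i) = v (0, i) := by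
  rw [hσ]
  simp [Matrix.toLin'_apply, Matrix.mulVec, dotProduct, Fintype.sum_prod_type,
    Matrix.blockDiagonal_apply, Fin.sum_univ_two, Finset.sum_ite_eq, Matrix.of_apply]

/-- The quotient map `ℤ^{2g} → (ℤ/n)^g`, `v ↦ (v(0,i) - v(1,i) mod n)_i`. -/
def q : V g →+ (Fin g → ZMod n) where
  toFun v i := ((v (0, i) - v (1, i) : ℤ) : ZMod n)
  map_zero' := by funext i; simp
  map_add' v w := by funext i; push_cast [Pi.add_apply]; ring

lemma q_apply (v : V g) (i : Fin g) :
    q n g v i = ((v (0, i) - v (1, i) : ℤ) : ZMod n) := rfl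

include hσ in
lemma q_sigma (x : Multiplicative (V g)) :
    q n g (Multiplicative.toAdd (σ x)) = q n g (Multiplicative.toAdd x) := by
  funext i
  have h0 := sigma0 n g σ hσ (Multiplicative.toAdd x) i
  have h1 := sigma1 n g σ hσ (Multiplicative.toAdd x) i
  simp only [q, AddMonoidHom.coe_mk, ZeroHom.coe_mk]
  have e0 : Multiplicative.toAdd (σ x) (0, i)
      = (n + 2) * Multiplicative.toAdd x (0, i) - Multiplicative.toAdd x (1, i) := h0
  have e1 : Multiplicative.toAdd (σ x) (1, i) = Multiplicative.toAdd x (0, i) := h1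
  rw [e0, e1]
  push_cast
  rw [ZMod.natCast_self]
  ring

include hσ in
lemma q_sigma_zpow (b : ℤ) (x : Multiplicative (V g)) :
    q n g (Multiplicative.toAdd ((σ ^ b) x)) = q n g (Multiplicative.toAdd x) := by
  induction b using Int.induction_on with
  | zero => simp
  | succ k ih =>
      have : ((σ : MulAut _) ^ ((k : ℤ) + 1)) x = σ ((σ ^ (k : ℤ)) x) := by
        rw [add_comm, zpow_add, zpow_one]; rfl
      rw [this, q_sigma n g σ hσ, ih]
  | pred k ih =>
      have : (σ ^ (-(k : ℤ))) x = σ ((σ ^ (-(k : ℤ) - 1)) x) := by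
        rw [← MulAut.mul_apply, ← zpow_one_add]; ring_nf
      rw [this, q_sigma n g σ hσ] at ih
      exact ih

/-- The forward homomorphism `G →* Multiplicative T`. -/
def f : G g σ →* Multiplicative (T n g) where
  toFun x := Multiplicative.ofAdd
    (![Multiplicative.toAdd x.1, Multiplicative.toAdd x.2.right],
      q n g (Multiplicative.toAdd x.2.left))
  map_one' := by
    simp only [Prod.fst_one, Prod.snd_one, SemidirectProduct.one_left,
      SemidirectProduct.one_right, toAdd_one, map_zero]
    congr 1
    ext : 1
    · funext j; fin_cases j <;> rfl
    · rfl
  map_mul' x y := by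
    have hq : q n g (Multiplicative.toAdd (x.2 * y.2).left)
        = q n g (Multiplicative.toAdd x.2.left) + q n g (Multiplicative.toAdd y.2.left) := by
      rw [SemidirectProduct.mul_left, toAdd_mul, map_add]
      congr 1
      exact q_sigma_zpow n g σ hσ (Multiplicative.toAdd x.2.right) y.2.left
    simp only [Prod.fst_mul, Prod.snd_mul, SemidirectProduct.mul_right, toAdd_mul, ← ofAdd_add]
    congr 1
    ext : 1
    · funext j
      fin_cases j <;> simp [Matrix.cons_val_zero, Matrix.cons_val_one]
    · exact hq

variable {n g σ} in
lemma f_apply (a : Multiplicative ℤ) (x : Multiplicative (V g)) (b : Multiplicative ℤ) :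
    f n g σ hσ (a, ⟨x, b⟩) = Multiplicative.ofAdd
      (![Multiplicative.toAdd a, Multiplicative.toAdd b],
        q n g (Multiplicative.toAdd x)) := rfl

/-- The abelianization, additively. -/
abbrev A := Additive (Abelianization (G g σ))

/-- `ν v = class of (1, (v, 0))` in the abelianization. -/
def nu : V g →+ A g σ where
  toFun v := Additive.ofMul (Abelianization.of
    (1, SemidirectProduct.inl (Multiplicative.ofAdd v)))
  map_zero' := by
    simp only [ofAdd_zero, map_one]
    rfl
  map_add' v w := by
    beta_reduce
    rw [ofAdd_add]
    have : ((1, SemidirectProduct.inl (Multiplicative.ofAdd v * Multiplicative.ofAdd w)) :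
        G g σ) = (1, SemidirectProduct.inl (Multiplicative.ofAdd v)) *
          (1, SemidirectProduct.inl (Multiplicative.ofAdd w)) := by
      rw [Prod.mk_mul_mk, one_mul, map_mul]
    rw [this, map_mul]
    rfl

def xgen : A g σ := Additive.ofMul (Abelianization.of (Multiplicative.ofAdd 1, 1))
def tgen : A g σ := Additive.ofMul (Abelianization.of
  (1, SemidirectProduct.inr (Multiplicative.ofAdd 1)))
def egen (i : Fin g) : A g σ := nu g σ (Pi.single (0, i) 1)

/-- Conjugation is trivial in the abelianization. -/
lemma conj_eq (x y : Abelianization (G g σ)) : x * y * x⁻¹ = y := by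
  rw [mul_comm x y, mul_assoc, mul_inv_cancel, mul_one]

lemma nu_sigma (v : V g) :
    nu g σ (Multiplicative.toAdd (σ (Multiplicative.ofAdd v))) = nu g σ v := by
  have key : (SemidirectProduct.inl
      ((zpowersHom (MulAut (Multiplicative (V g))) σ (Multiplicative.ofAdd 1))
        (Multiplicative.ofAdd v)) :
      Multiplicative (V g) ⋊[zpowersHom (MulAut (Multiplicative (V g))) σ] Multiplicative ℤ)
      = SemidirectProduct.inr (Multiplicative.ofAdd 1) *
        SemidirectProduct.inl (Multiplicative.ofAdd v) *
        SemidirectProduct.inr (Multiplicative.ofAdd 1)⁻¹ :=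
    SemidirectProduct.inl_aut _ _
  have hφ : (zpowersHom (MulAut (Multiplicative (V g))) σ (Multiplicative.ofAdd 1))
      (Multiplicative.ofAdd v) = σ (Multiplicative.ofAdd v) := by
    rw [zpowersHom_apply]
    norm_num
  rw [hφ] at key
  unfold nu
  simp only [AddMonoidHom.coe_mk, ZeroHom.coe_mk]
  congr 1
  show Abelianization.of (1, SemidirectProduct.inl (σ (Multiplicative.ofAdd v)))
      = Abelianization.of (1, SemidirectProduct.inl (Multiplicative.ofAdd v))
  rw [key]
  have : ((1, SemidirectProduct.inr (Multiplicative.ofAdd 1) *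
      SemidirectProduct.inl (Multiplicative.ofAdd v) *
      SemidirectProduct.inr (Multiplicative.ofAdd 1)⁻¹) : G g σ)
      = (1, SemidirectProduct.inr (Multiplicative.ofAdd 1)) *
        (1, SemidirectProduct.inl (Multiplicative.ofAdd v)) *
        (1, SemidirectProduct.inr (Multiplicative.ofAdd 1))⁻¹ := by
      simp [Prod.mk_mul_mk]
  rw [this, map_mul, map_mul, map_inv]
  exact conj_eq g σ _ _

include hσ in
lemma sigma_single1 (i : Fin g) :
    Multiplicative.toAdd (σ (Multiplicative.ofAdd (Pi.single ((1 : Fin 2), i) 1 : V g)))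
      = -Pi.single ((0 : Fin 2), i) 1 := by
  funext p
  obtain ⟨j, l⟩ := p
  fin_cases j <;> beta_reduce
  · simp only [Fin.zero_eta, Fin.mk_one]
    rw [sigma0 n g σ hσ]
    simp [Pi.single_apply, Prod.ext_iff]
  · simp only [Fin.zero_eta, Fin.mk_one]
    rw [sigma1 n g σ hσ]
    simp [Pi.single_apply, Prod.ext_iff]

include hσ in
lemma sigma_single0 (i : Fin g) :
    Multiplicative.toAdd (σ (Multiplicative.ofAdd (Pi.single ((0 : Fin 2), i) 1 : V g)))
      = ((n : ℤ) + 2) • Pi.single ((0 : Fin 2), i) 1 + Pi.single ((1 : Fin 2), i) 1 := by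
  funext p
  obtain ⟨j, l⟩ := p
  fin_cases j <;> beta_reduce
  · simp only [Fin.zero_eta, Fin.mk_one]
    rw [sigma0 n g σ hσ]
    simp [Pi.single_apply, Prod.ext_iff]
  · simp only [Fin.zero_eta, Fin.mk_one]
    rw [sigma1 n g σ hσ]
    simp [Pi.single_apply, Prod.ext_iff]

include hσ in
lemma nu_single1 (i : Fin g) :
    nu g σ (Pi.single ((1 : Fin 2), i) 1) = - egen g σ i := by
  have h := nu_sigma g σ (Pi.single ((1 : Fin 2), i) 1)
  rw [sigma_single1 n g σ hσ, map_neg] at h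
  rw [← h]
  rfl

include hσ in
lemma n_egen (i : Fin g) : (n : ℤ) • egen g σ i = 0 := by
  have h := nu_sigma g σ (Pi.single ((0 : Fin 2), i) 1)
  rw [sigma_single0 n g σ hσ, map_add, map_zsmul, nu_single1 n g σ hσ] at h
  have h1 : ((n : ℤ) + 2) • egen g σ i + -egen g σ i = egen g σ i := h
  set E := egen g σ i with hE
  have h3 : (n : ℤ) • E + ((2 : ℤ) • E + -E) = E := by
    rw [← add_assoc, ← add_smul]; exact h1
  have h4 : (2 : ℤ) • E + -E = E := by rw [two_smul]; abel
  rw [h4] at h3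
  have h5 : (n : ℤ) • E + E = 0 + E := by rw [zero_add]; exact h3
  exact add_right_cancel h5

include hσ in
lemma nu_formula (v : V g) :
    nu g σ v = ∑ i, (v (0, i) - v (1, i)) • egen g σ i := by
  have hv : v = ∑ p : Fin 2 × Fin g, v p • (Pi.single p 1 : V g) := by
    funext x
    simp [Finset.sum_apply, Pi.single_apply]
  have step : nu g σ v = ∑ p : Fin 2 × Fin g, v p • nu g σ (Pi.single p 1) := by
    conv_lhs => rw [hv]
    rw [map_sum]
    simp only [map_zsmul]
  rw [step, Fintype.sum_prod_type, Fin.sum_univ_two]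
  simp only [nu_single1 n g σ hσ, smul_neg, egen]
  rw [← Finset.sum_add_distrib]
  exact Finset.sum_congr rfl fun i _ => by rw [sub_smul]; abel

/-- The inverse hom on the `ℤ²` factor. -/
def psi1 : (Fin 2 → ℤ) →+ A g σ :=
  (zmultiplesHom (A g σ) (xgen g σ)).comp (Pi.evalAddMonoidHom (fun _ => ℤ) 0) +
  (zmultiplesHom (A g σ) (tgen g σ)).comp (Pi.evalAddMonoidHom (fun _ => ℤ) 1)

/-- The inverse hom on the `(ℤ/n)^g` factor. -/
def psi2 : (Fin g → ZMod n) →+ A g σ :=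
  ∑ i : Fin g, (ZMod.lift n ⟨zmultiplesHom (A g σ) (egen g σ i), by
      simpa using n_egen n g σ hσ i⟩).comp (Pi.evalAddMonoidHom (fun _ => ZMod n) i)

def psi : T n g →+ A g σ :=
  (psi1 g σ).comp (AddMonoidHom.fst _ _) + (psi2 n g σ hσ).comp (AddMonoidHom.snd _ _)

lemma psi_apply (u : Fin 2 → ℤ) (c : Fin g → ZMod n) :
    psi n g σ hσ (u, c) = u 0 • xgen g σ + u 1 • tgen g σ +
      ∑ i : Fin g, ZMod.lift n ⟨zmultiplesHom (A g σ) (egen g σ i), by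
        simpa using n_egen n g σ hσ i⟩ (c i) := by
  simp only [psi, psi1, psi2, AddMonoidHom.add_apply, AddMonoidHom.comp_apply,
    Pi.evalAddMonoidHom_apply,
    zmultiplesHom_apply, AddMonoidHom.finset_sum_apply]
  rfl

/-- The key computation: `psi` is a left inverse of `f` (on generators of the
abelianization). -/
lemma key (x : G g σ) :
    psi n g σ hσ (Multiplicative.toAdd (f n g σ hσ x)) = Additive.ofMul (Abelianization.of x) := by
  obtain ⟨a, xv, b⟩ := x
  rw [f_apply]
  rw [show Multiplicative.toAdd (Multiplicative.ofAdd
    (![Multiplicative.toAdd a, Multiplicative.toAdd b],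
      q n g (Multiplicative.toAdd xv))) = (![Multiplicative.toAdd a, Multiplicative.toAdd b],
      q n g (Multiplicative.toAdd xv)) from rfl]
  rw [psi_apply]
  have hsum : (∑ i : Fin g, ZMod.lift n ⟨zmultiplesHom (A g σ) (egen g σ i), by
        simpa using n_egen n g σ hσ i⟩ (q n g (Multiplicative.toAdd xv) i))
      = nu g σ (Multiplicative.toAdd xv) := by
    rw [nu_formula n g σ hσ]
    refine Finset.sum_congr rfl fun i _ => ?_
    rw [q_apply, ZMod.lift_coe]
    rfl
  rw [hsum]
  -- decompose x
  have hdecomp : ((a, ⟨xv, b⟩) : G g σ)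
      = ((Multiplicative.ofAdd 1, 1) : G g σ) ^ (Multiplicative.toAdd a) *
        (1, SemidirectProduct.inl xv) *
        ((1, SemidirectProduct.inr (Multiplicative.ofAdd 1)) : G g σ) ^ (Multiplicative.toAdd b) := by
    have ha0 : ∀ z : Multiplicative ℤ,
        (Multiplicative.ofAdd (1 : ℤ)) ^ (Multiplicative.toAdd z) = z := by
      intro z
      apply Multiplicative.toAdd.injective
      rw [toAdd_zpow]
      simp
    have ha : ((Multiplicative.ofAdd 1, 1) : G g σ) ^ (Multiplicative.toAdd a)
        = ((a, 1) : G g σ) := by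
      rw [show ((Multiplicative.ofAdd 1, 1) : G g σ)
            = MonoidHom.inl _ _ (Multiplicative.ofAdd (1 : ℤ)) from rfl, ← map_zpow, ha0]
      rfl
    have hb : ((1, SemidirectProduct.inr (Multiplicative.ofAdd 1)) : G g σ) ^ (Multiplicative.toAdd b)
        = ((1, SemidirectProduct.inr b) : G g σ) := by
      rw [show ((1, SemidirectProduct.inr (Multiplicative.ofAdd 1)) : G g σ)
            = (MonoidHom.inr _ _).comp SemidirectProduct.inr (Multiplicative.ofAdd (1 : ℤ)) from rfl,
          ← map_zpow, ha0]
      rfl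
    rw [ha, hb]
    simp [Prod.mk_mul_mk, SemidirectProduct.mk_eq_inl_mul_inr]
  rw [hdecomp]
  have habel : Abelianization.of (((Multiplicative.ofAdd 1, 1) : G g σ) ^ (Multiplicative.toAdd a) *
        (1, SemidirectProduct.inl xv) *
        ((1, SemidirectProduct.inr (Multiplicative.ofAdd 1)) : G g σ) ^ (Multiplicative.toAdd b))
      = (Abelianization.of ((Multiplicative.ofAdd 1, 1) : G g σ)) ^ (Multiplicative.toAdd a) *
        Abelianization.of ((1, SemidirectProduct.inl xv) : G g σ) *
        (Abelianization.of ((1, SemidirectProduct.inr (Multiplicative.ofAdd 1)) : G g σ))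
          ^ (Multiplicative.toAdd b) := by
    rw [map_mul, map_mul, map_zpow, map_zpow]
  rw [habel]
  simp only [ofMul_mul, ofMul_zpow]
  have h2 : Additive.ofMul (Abelianization.of ((1, SemidirectProduct.inl xv) : G g σ))
      = nu g σ (Multiplicative.toAdd xv) := rfl
  rw [h2]
  rw [show (Additive.ofMul (Abelianization.of ((Multiplicative.ofAdd 1, 1) : G g σ))) = xgen g σ from rfl,
      show (Additive.ofMul (Abelianization.of ((1, SemidirectProduct.inr (Multiplicative.ofAdd 1)) : G g σ))) = tgen g σ from rfl]
  have hu0 : (![Multiplicative.toAdd a, Multiplicative.toAdd b]) 0 = Multiplicative.toAdd a := rfl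
  have hu1 : (![Multiplicative.toAdd a, Multiplicative.toAdd b]) 1 = Multiplicative.toAdd b := rfl
  rw [hu0, hu1]
  abel

/-- The induced map on the abelianization. -/
def E : Abelianization (G g σ) →* Multiplicative (T n g) :=
  Abelianization.lift (f n g σ hσ)

lemma E_surjective : Function.Surjective (E n g σ hσ) := by
  intro t
  set v := (Multiplicative.toAdd t).1 with hv
  set c := (Multiplicative.toAdd t).2 with hc
  refine ⟨Abelianization.of (Multiplicative.ofAdd (v 0),
    ⟨Multiplicative.ofAdd (fun p => if p.1 = 0 then (ZMod.cast (c p.2) : ℤ) else 0),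
      Multiplicative.ofAdd (v 1)⟩), ?_⟩
  rw [E, Abelianization.lift_apply_of, f_apply]
  apply Multiplicative.toAdd.injective
  rw [toAdd_ofAdd]
  have : Multiplicative.toAdd t = (v, c) := rfl
  rw [this]
  refine Prod.ext ?_ ?_
  · funext j
    fin_cases j <;> rfl
  · funext i
    show q n g (Multiplicative.toAdd (Multiplicative.ofAdd
      fun p => if p.1 = (0 : Fin 2) then (ZMod.cast (c p.2) : ℤ) else 0)) i = c i
    rw [q_apply]
    simp only [toAdd_ofAdd]
    norm_num [ZMod.intCast_zmod_cast]

/-- The inverse map, multiplicatively. -/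
def Psi : Multiplicative (T n g) →* Abelianization (G g σ) :=
  AddMonoidHom.toMultiplicativeLeft (psi n g σ hσ)

lemma left_inv : ∀ y, Psi n g σ hσ (E n g σ hσ y) = y := by
  suffices h : (Psi n g σ hσ).comp (E n g σ hσ) = MonoidHom.id _ by
    intro y; exact DFunLike.congr_fun h y
  refine Abelianization.hom_ext _ _ (MonoidHom.ext fun x => ?_)
  show Psi n g σ hσ (E n g σ hσ (Abelianization.of x)) = Abelianization.of x
  rw [E, Abelianization.lift_apply_of]
  exact key n g σ hσ x

lemma E_injective : Function.Injective (E n g σ hσ) :=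
  Function.LeftInverse.injective (left_inv n g σ hσ)

end Stmt12



/-- Let `n ≥ 2`, `g ≥ 1`, let `B` be the block-diagonal
`2g × 2g` integer matrix made of `g` copies of `Aₙ = !![n+2, -1; 1, 0]`, and let
`σ_B` be the automorphism of the free abelian group `ℤ^{2g}` determined by `B`.
Then the abelianization of `ℤ × (ℤ^{2g} ⋊_{σ_B} ℤ)` is isomorphic to
`ℤ² ⊕ (ℤ/nℤ)^g`. -/
theorem stmt_12 (n g : ℕ) (hn : 2 ≤ n) (hg : 1 ≤ g)
    (σ : MulAut (Multiplicative (Fin 2 × Fin g → ℤ)))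
    (hσ : ∀ v : Fin 2 × Fin g → ℤ,
      Multiplicative.toAdd (σ (Multiplicative.ofAdd v)) =
        Matrix.toLin'
          (Matrix.blockDiagonal fun _ : Fin g =>
            (!![(n : ℤ) + 2, -1; 1, 0] : Matrix (Fin 2) (Fin 2) ℤ)) v) :
    Nonempty
      (Additive (Abelianization (Multiplicative ℤ ×
          (Multiplicative (Fin 2 × Fin g → ℤ)
            ⋊[zpowersHom (MulAut (Multiplicative (Fin 2 × Fin g → ℤ))) σ]
            Multiplicative ℤ)))
        ≃+ ((Fin 2 → ℤ) × (Fin g → ZMod n))) := by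
  exact ⟨MulEquiv.toAdditiveLeft (MulEquiv.ofBijective (Stmt12.E n g σ hσ)
    ⟨Stmt12.E_injective n g σ hσ, Stmt12.E_surjective n g σ hσ⟩)⟩
end

section
/- Let N be a finitely generated group, σ an automorphism of N, and G = N ⋊_σ ℤ. Let V = N^{ab} ⊗_ℤ ℚ and let T : V → V be the linear automorphism induced by σ. If 1 is not an eigenvalue of T (equivalently, T − id_V is injective), then the first rational Betti number of G equals 1; that is, (abelianization of G) ⊗_ℤ ℚ is a 1-dimensional ℚ-vector space. -/
open TensorProduct SemidirectProduct

instance : Module.Flat ℤ ℚ := IsLocalization.flat ℚ (nonZeroDivisors ℤ)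

lemma Abelianization.of_surj {G : Type*} [Group G] : Function.Surjective (Abelianization.of (G := G)) :=
  QuotientGroup.mk'_surjective _

section aux
variable {N : Type*} [Group N] (σ : MulAut N)

abbrev GG := N ⋊[zpowersHom (MulAut N) σ] Multiplicative ℤ

noncomputable def jj : Additive (Abelianization N) →+ Additive (Abelianization (GG σ)) :=
  MonoidHom.toAdditive (Abelianization.lift ((Abelianization.of).comp inl))

noncomputable def pp : Additive (Abelianization (GG σ)) →+ ℤ where
  toFun a := Multiplicative.toAdd (Abelianization.lift rightHom a.toMul)
  map_zero' := by simp
  map_add' a b := by simp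

lemma jj_apply (n : N) :
    jj σ (Additive.ofMul (Abelianization.of n)) = Additive.ofMul (Abelianization.of (inl n : GG σ)) := by
  simp [jj]

lemma pp_apply (g : GG σ) :
    pp σ (Additive.ofMul (Abelianization.of g)) = Multiplicative.toAdd (rightHom g) := by
  simp [pp]

lemma ofMul_eq {α : Type*} [Monoid α] (b : Additive α) (n : α) (hn : n = Additive.toMul b) :
    b = Additive.ofMul n := by rw [hn]; rfl

lemma pp_jj (b : Additive (Abelianization N)) : pp σ (jj σ b) = 0 := by
  obtain ⟨n, hn⟩ := Abelianization.of_surj (Additive.toMul b)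
  rw [ofMul_eq b _ hn, jj_apply, pp_apply]
  simp

lemma hexact : Function.Exact ((jj σ).toIntLinearMap) ((pp σ).toIntLinearMap) := by
  intro a
  constructor
  · intro ha
    obtain ⟨g, hg⟩ := Abelianization.of_surj (Additive.toMul a)
    have hae : a = Additive.ofMul (Abelianization.of g) := ofMul_eq a _ hg
    rw [hae, AddMonoidHom.coe_toIntLinearMap, pp_apply] at ha
    have hr : g.right = 1 := by
      have : Multiplicative.toAdd g.right = 0 := ha
      simpa using this
    refine ⟨Additive.ofMul (Abelianization.of g.left), ?_⟩
    have hgl : (inl g.left : GG σ) = g := by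
      cases g with
      | mk l r => simp_all [SemidirectProduct.ext_iff, hr]
    show jj σ (Additive.ofMul (Abelianization.of g.left)) = a
    rw [jj_apply, hgl, hae]
  · rintro ⟨b, rfl⟩
    exact pp_jj σ b

lemma jj_conj (b : Additive (Abelianization N)) :
    jj σ (MonoidHom.toAdditive (Abelianization.map σ.toMonoidHom) b) = jj σ b := by
  obtain ⟨n, hn⟩ := Abelianization.of_surj (Additive.toMul b)
  have hb : b = Additive.ofMul (Abelianization.of n) := ofMul_eq b _ hn
  subst hb
  have h1 : MonoidHom.toAdditive (Abelianization.map σ.toMonoidHom)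
      (Additive.ofMul (Abelianization.of n)) = Additive.ofMul (Abelianization.of (σ n)) := by
    simp [Abelianization.map_of]
  rw [h1, jj_apply, jj_apply]
  have h2 : (inl (σ n) : GG σ)
      = inr (Multiplicative.ofAdd 1) * inl n * (inr (Multiplicative.ofAdd 1))⁻¹ := by
    have := SemidirectProduct.inl_aut (φ := zpowersHom (MulAut N) σ) (Multiplicative.ofAdd (1:ℤ)) n
    simpa using this
  rw [h2]
  simp only [map_mul, map_inv]
  congr 1
  rw [mul_right_comm, mul_inv_cancel, one_mul]

end aux

/-- Let `N` be a finitely generated group, `σ ∈ Aut N`, and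
`G = N ⋊_σ ℤ`.  Let `V = Nᵃᵇ ⊗_ℤ ℚ` and let `T : V → V` be the automorphism
induced by `σ`.  If `1` is not an eigenvalue of `T` (i.e. `T - id` is
injective), then the first rational Betti number of `G` is `1`:
`(abelianization of G) ⊗_ℤ ℚ` is `1`-dimensional over `ℚ`. -/
theorem stmt_13 (N : Type*) [Group N] [Group.FG N] (σ : MulAut N)
    (h : Function.Injective
      (LinearMap.baseChange ℚ
          (MonoidHom.toAdditive (Abelianization.map σ.toMonoidHom)).toIntLinearMap -
        (LinearMap.id :
          ℚ ⊗[ℤ] Additive (Abelianization N) →ₗ[ℚ] ℚ ⊗[ℤ] Additive (Abelianization N)))) :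
    Module.finrank ℚ
      (ℚ ⊗[ℤ] Additive (Abelianization
        (N ⋊[zpowersHom (MulAut N) σ] Multiplicative ℤ))) = 1 := by
  classical
  set B := Additive (Abelianization N)
  haveI : Group.FG (Abelianization N) := Group.fg_of_surjective Abelianization.of_surj
  haveI : Module.Finite ℤ B := Module.Finite.iff_addGroup_fg.mpr inferInstance
  haveI : Module.Finite ℚ (ℚ ⊗[ℤ] B) := Module.Finite.base_change ℤ ℚ B
  set T' : B →ₗ[ℤ] B :=
    (MonoidHom.toAdditive (Abelianization.map σ.toMonoidHom)).toIntLinearMap with hT'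
  set J := LinearMap.baseChange ℚ (jj σ).toIntLinearMap with hJ
  set P := LinearMap.baseChange ℚ (pp σ).toIntLinearMap with hP
  -- surjectivity of T_Q - id
  have hsurj := LinearMap.injective_iff_surjective.mp h
  -- J ∘ T_Q = J
  have hJT : ∀ x, J (LinearMap.baseChange ℚ T' x) = J x := by
    intro x
    induction x using TensorProduct.induction_on with
    | zero => simp
    | tmul q b =>
        rw [LinearMap.baseChange_tmul, hJ, LinearMap.baseChange_tmul,
          LinearMap.baseChange_tmul]
        congr 1
        exact jj_conj σ b
    | add x y hx hy => rw [map_add, map_add, hx, hy, map_add]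
  -- J = 0
  have hJ0 : ∀ x, J x = 0 := by
    intro x
    obtain ⟨y, hy⟩ := hsurj x
    have : J x = J (LinearMap.baseChange ℚ T' y) - J y := by
      rw [← hy]; simp
    rw [this, hJT, sub_self]
  -- exactness after tensoring
  have hex : Function.Exact J P := by
    have := Module.Flat.lTensor_exact ℚ (hexact σ)
    exact this
  -- P injective
  have hPinj : Function.Injective P := by
    rw [injective_iff_map_eq_zero]
    intro x hx
    obtain ⟨y, hy⟩ := (hex x).mp hx
    rw [← hy, hJ0]
  -- P surjective
  have hppsurj : Function.Surjective ((pp σ).toIntLinearMap) := by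
    intro n
    refine ⟨Additive.ofMul (Abelianization.of (inr (Multiplicative.ofAdd n))), ?_⟩
    show pp σ (Additive.ofMul (Abelianization.of (inr (Multiplicative.ofAdd n)))) = n
    rw [pp_apply, rightHom_inr]
    simp
  have hPsurj : Function.Surjective P :=
    LinearMap.lTensor_surjective ℚ hppsurj
  let e : (ℚ ⊗[ℤ] Additive (Abelianization (GG σ))) ≃ₗ[ℚ] ℚ ⊗[ℤ] ℤ :=
    LinearEquiv.ofBijective P ⟨hPinj, hPsurj⟩
  rw [e.finrank_eq, (TensorProduct.AlgebraTensorModule.rid ℤ ℚ ℚ).finrank_eq,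
    Module.finrank_self]
end
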